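/- If M is a Schurian Λ-module, then the full subcategory E(M) of mod-Λ consisting of all modules admitting a finite filtration with all subquotients isomorphic to M is an abelian subcategory (closed under kernels and cokernels of its morphisms). -/

import Mathlib

open scoped BigOperators

noncomputable section

/-- Dot product of a real vector with a dimension vector. -/
def dprod {n : ℕ} (x : Fin n → ℝ) (v : Fin n → ℕ) : ℝ := ∑ i, x i * (v i : ℝ)

/-- Slope of a dimension vector with respect to a linear stability function
`Z(x) = a·x + i b·x`. -/
def zslope {n : ℕ} (a b : Fin n → ℝ) (v : Fin n → ℕ) : ℝ := dprod a v / dprod b v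

/-- The semistability set `D(M)` of a module `M`, with respect to a dimension-vector
assignment `d`. -/
def DSet {Λ : Type} [Ring Λ] {n : ℕ}
    (d : (N : Type) → [AddCommGroup N] → [Module Λ N] → Fin n → ℕ)
    (M : Type) [AddCommGroup M] [Module Λ M] : Set (Fin n → ℝ) :=
  {x | dprod x (d M) = 0 ∧ ∀ M' : Submodule Λ M, dprod x (d ↥M') ≤ 0}

/-- A module is Schurian if it is nonzero and every nonzero endomorphism is invertible,
i.e. its endomorphism ring is a division algebra. -/
def Schurian (Λ : Type) [Ring Λ] (M : Type) [AddCommGroup M] [Module Λ M] : Prop :=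
  (∃ y : M, y ≠ 0) ∧ ∀ f : M →ₗ[Λ] M, f ≠ 0 → Function.Bijective f

/-- `X` belongs to `E(M)`: `X` admits a finite filtration with all subquotients
isomorphic to `M`. -/
def IsFiltered (Λ : Type) [Ring Λ] (M : Type) [AddCommGroup M] [Module Λ M]
    (X : Type) [AddCommGroup X] [Module Λ X] : Prop :=
  ∃ (k : ℕ) (F : Fin (k + 1) → Submodule Λ X), Monotone F ∧ F 0 = ⊥ ∧ F (Fin.last k) = ⊤ ∧
    ∀ i : Fin k, Nonempty
      ((↥(F i.succ) ⧸ Submodule.comap (F i.succ).subtype (F i.castSucc)) ≃ₗ[Λ] M)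

/-- Slope at time `t` of a dimension vector, for a nonlinear stability function
`Z_t(x) = a_t·x + i b_t·x`. -/
def muZ {n : ℕ} (a b : ℝ → Fin n → ℝ) (t : ℝ) (v : Fin n → ℕ) : ℝ :=
  dprod (a t) v / dprod (b t) v

/-- `M` is `Z_t`-semistable: every nonzero submodule has zslope at least that of `M`. -/
def Semistable {Λ : Type} [Ring Λ] {n : ℕ}
    (d : (N : Type) → [AddCommGroup N] → [Module Λ N] → Fin n → ℕ)
    (a b : ℝ → Fin n → ℝ) (t : ℝ)
    (M : Type) [AddCommGroup M] [Module Λ M] : Prop :=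
  ∀ M' : Submodule Λ M, M' ≠ ⊥ → muZ a b t (d M) ≤ muZ a b t (d ↥M')

/-- The nonlinear stability function given by `(a, b)` is green (for `Λ`): at every
semistable pair `(N, t₀)` (with `N` a nonzero finite-length `Λ`-module, `N`
`Z_{t₀}`-semistable and `μ_{t₀}(N) = t₀`), the derivative of `t ↦ μ_t(N)` at `t₀`
is `< 1`. -/
def ZGreen {Λ : Type} [Ring Λ] {n : ℕ}
    (d : (N : Type) → [AddCommGroup N] → [Module Λ N] → Fin n → ℕ)
    (a b : ℝ → Fin n → ℝ) : Prop :=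
  ∀ (N : Type) [AddCommGroup N] [Module Λ N] [IsNoetherian Λ N] [IsArtinian Λ N] (t₀ : ℝ),
    (∃ y : N, y ≠ 0) → Semistable d a b t₀ N → muZ a b t₀ (d N) = t₀ →
      deriv (fun t => muZ a b t (d N)) t₀ < 1

/-- `t₀(M)`: the smallest `t` with `μ_t(M) = t` (as an infimum). -/
def tzero {n : ℕ} (a b : ℝ → Fin n → ℝ) (v : Fin n → ℕ) : ℝ := sInf {t | muZ a b t v = t}

/-- `t₁(M)`: the smallest value of `t₀(M')` over nonzero submodules `M' ⊆ M`. -/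
def tone {Λ : Type} [Ring Λ] {n : ℕ}
    (d : (N : Type) → [AddCommGroup N] → [Module Λ N] → Fin n → ℕ)
    (a b : ℝ → Fin n → ℝ)
    (M : Type) [AddCommGroup M] [Module Λ M] : ℝ :=
  sInf {s : ℝ | ∃ M' : Submodule Λ M, M' ≠ ⊥ ∧ s = tzero a b (d ↥M')}


section Aux
open Submodule LinearMap Function

def Filt (R : Type) [Ring R] (M : Type) [AddCommGroup M] [Module R M] :
    (k : ℕ) → (X : Type) → [AddCommGroup X] → [Module R X] → Prop
  | 0, X, _, _ => Subsingleton X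
  | (k+1), X, _, _ => ∃ N : Submodule R X, Filt R M k ↥N ∧ Nonempty ((X ⧸ N) ≃ₗ[R] M)

variable {R : Type} [Ring R] {M : Type} [AddCommGroup M] [Module R M]

theorem filt_zero {X : Type} [AddCommGroup X] [Module R X] :
    Filt R M 0 X ↔ Subsingleton X := Iff.rfl

theorem filt_succ {k : ℕ} {X : Type} [AddCommGroup X] [Module R X] :
    Filt R M (k+1) X ↔
      ∃ N : Submodule R X, Filt R M k ↥N ∧ Nonempty ((X ⧸ N) ≃ₗ[R] M) := Iff.rfl

/-- transport along a linear equivalence -/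
theorem filt_congr {k : ℕ} {X Y : Type} [AddCommGroup X] [Module R X]
    [AddCommGroup Y] [Module R Y] (e : X ≃ₗ[R] Y) (h : Filt R M k X) : Filt R M k Y := by
  induction k generalizing X Y with
  | zero =>
    haveI : Subsingleton X := h
    exact e.symm.toEquiv.subsingleton
  | succ k ih =>
    obtain ⟨N, hN, ⟨q⟩⟩ := h
    refine ⟨N.map (e : X →ₗ[R] Y), ih (e.submoduleMap N) hN, ⟨?_⟩⟩
    exact (Submodule.Quotient.equiv N (N.map (e : X →ₗ[R] Y)) e rfl).symm.trans q

/-- quotient by the kernel onto a submodule equal to the range -/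
def quotEquivKR' {A B : Type} [AddCommGroup A] [Module R A] [AddCommGroup B] [Module R B]
    (φ : A →ₗ[R] B) {K : Submodule R A} {P : Submodule R B}
    (hK : ker φ = K) (hP : range φ = P) : (A ⧸ K) ≃ₗ[R] ↥P :=
  (Submodule.quotEquivOfEq _ _ hK.symm).trans
    (φ.quotKerEquivRange.trans (LinearEquiv.ofEq _ _ hP))

/-- quotient by the kernel when surjective -/
def quotEquivKR {A B : Type} [AddCommGroup A] [Module R A] [AddCommGroup B] [Module R B]
    (φ : A →ₗ[R] B) {K : Submodule R A}
    (hK : ker φ = K) (hsurj : range φ = ⊤) : (A ⧸ K) ≃ₗ[R] B :=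
  (quotEquivKR' φ hK hsurj).trans Submodule.topEquiv

/-- `↥⊤ ⧸ P' ≃ X ⧸ P` -/
def topQuotEquiv {X : Type} [AddCommGroup X] [Module R X] (P : Submodule R X) :
    (↥(⊤ : Submodule R X) ⧸ comap (⊤ : Submodule R X).subtype P) ≃ₗ[R] X ⧸ P :=
  quotEquivKR (P.mkQ.comp (⊤ : Submodule R X).subtype)
    (by rw [LinearMap.ker_comp, Submodule.ker_mkQ])
    (by rw [LinearMap.range_comp, Submodule.range_subtype, Submodule.map_top,
      Submodule.range_mkQ])

/-- image of a subquotient under an injective map -/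
def quotMapEquiv {X Y : Type} [AddCommGroup X] [Module R X] [AddCommGroup Y] [Module R Y]
    (f : X →ₗ[R] Y) (hf : Injective f) (A B : Submodule R X) (hBA : B ≤ A) :
    (↥A ⧸ comap A.subtype B) ≃ₗ[R] (↥(A.map f) ⧸ comap (A.map f).subtype (B.map f)) := by
  refine Submodule.Quotient.equiv _ _ (Submodule.equivMapOfInjective f hf A) ?_
  ext ⟨y, hy⟩
  simp only [Submodule.mem_map, Submodule.mem_comap]
  constructor
  · rintro ⟨⟨x, hxA⟩, hxB, hxy⟩
    have : f x = y := congrArg Subtype.val hxy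
    exact ⟨x, hxB, this⟩
  · rintro ⟨b, hb, hby⟩
    exact ⟨⟨b, hBA hb⟩, hb, Subtype.ext hby⟩

/-- E(M) is closed under extensions -/
theorem filt_ext {j k : ℕ} {X : Type} [AddCommGroup X] [Module R X]
    (N : Submodule R X) (hN : Filt R M j ↥N) (hQ : Filt R M k (X ⧸ N)) :
    Filt R M (j + k) X := by
  induction k generalizing X j with
  | zero =>
    haveI : Subsingleton (X ⧸ N) := hQ
    have hNtop : N = ⊤ := by
      rw [eq_top_iff]
      intro x _
      have : N.mkQ x = 0 := Subsingleton.elim _ _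
      rwa [← Submodule.Quotient.mk_eq_zero]
    subst hNtop
    exact filt_congr Submodule.topEquiv hN
  | succ k ih =>
    obtain ⟨P, hP, ⟨q⟩⟩ := hQ
    have hmap : Submodule.map N.mkQ (comap N.mkQ P) = P := by
      rw [Submodule.map_comap_eq, Submodule.range_mkQ, top_inf_eq]
    have hNle : N ≤ comap N.mkQ P := by
      intro x hx
      have h0 : N.mkQ x = 0 := by
        rwa [Submodule.mkQ_apply, Submodule.Quotient.mk_eq_zero]
      simp [Submodule.mem_comap, h0]
    refine ⟨comap N.mkQ P, ?_, ⟨?_⟩⟩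
    · -- Filt (j + k) ↥(comap N.mkQ P)
      refine ih (comap (comap N.mkQ P).subtype N)
        (filt_congr (Submodule.comapSubtypeEquivOfLe hNle).symm hN) ?_
      refine filt_congr (quotEquivKR' (N.mkQ.comp (comap N.mkQ P).subtype)
        ?_ ?_).symm hP
      · rw [LinearMap.ker_comp, Submodule.ker_mkQ]
      · rw [LinearMap.range_comp, Submodule.range_subtype, hmap]
    · -- X ⧸ comap N.mkQ P ≃ M
      exact (Submodule.quotientQuotientEquivQuotient N (comap N.mkQ P) hNle).symm.trans
        ((Submodule.quotEquivOfEq _ _ hmap).trans q)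

theorem filt_one {X : Type} [AddCommGroup X] [Module R X] (e : X ≃ₗ[R] M) :
    Filt R M 1 X :=
  ⟨⊥, inferInstanceAs (Subsingleton ↥(⊥ : Submodule R X)),
    ⟨(Submodule.quotEquivOfEqBot ⊥ rfl).trans e⟩⟩

/-- every nontrivially filtered module has a bottom copy of `M` -/
theorem filt_bot {k : ℕ} {X : Type} [AddCommGroup X] [Module R X]
    (h : Filt R M (k+1) X) :
    ∃ S : Submodule R X, Nonempty (↥S ≃ₗ[R] M) ∧ Filt R M k (X ⧸ S) := by
  induction k generalizing X with
  | zero =>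
    obtain ⟨N, hN0, ⟨q⟩⟩ := h
    haveI : Subsingleton ↥N := hN0
    have hNbot : N = ⊥ := by
      ext x
      simp only [Submodule.mem_bot]
      constructor
      · intro hx
        have : (⟨x, hx⟩ : ↥N) = 0 := Subsingleton.elim _ _
        exact congrArg Subtype.val this
      · rintro rfl; exact N.zero_mem
    refine ⟨⊤, ⟨Submodule.topEquiv.trans
      ((Submodule.quotEquivOfEqBot N hNbot).symm.trans q)⟩, ?_⟩
    have hz : ∀ z : X ⧸ (⊤ : Submodule R X), z = 0 := by
      intro z
      induction z using Quotient.inductionOn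
      exact (Submodule.Quotient.mk_eq_zero _).mpr Submodule.mem_top
    exact ⟨fun a b => by rw [hz a, hz b]⟩
  | succ k ih =>
    obtain ⟨N, hN, ⟨q⟩⟩ := h
    obtain ⟨S', ⟨e'⟩, hQ'⟩ := ih hN
    refine ⟨S'.map N.subtype,
      ⟨(Submodule.equivMapOfInjective N.subtype N.injective_subtype S').symm.trans e'⟩, ?_⟩
    have hle : S'.map N.subtype ≤ N := by
      rintro x ⟨s, _, rfl⟩; exact s.2
    refine ⟨N.map (S'.map N.subtype).mkQ, ?_, ⟨?_⟩⟩
    · refine filt_congr (quotEquivKR' ((S'.map N.subtype).mkQ.comp N.subtype) ?_ ?_) hQ'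
      · rw [LinearMap.ker_comp, Submodule.ker_mkQ, Submodule.comap_map_eq,
          Submodule.ker_subtype, sup_bot_eq]
      · rw [LinearMap.range_comp, Submodule.range_subtype]
    · exact (Submodule.quotientQuotientEquivQuotient _ N hle).trans q

/-- a nonzero map from a filtered module to `M` is surjective -/
theorem filt_hom_surj (hM : Schurian R M) {k : ℕ} {X : Type} [AddCommGroup X] [Module R X]
    (hX : Filt R M k X) (h : X →ₗ[R] M) (hne : h ≠ 0) : Surjective h := by
  induction k generalizing X with
  | zero =>
    haveI : Subsingleton X := hX
    exact absurd (by ext x; simp [Subsingleton.elim x 0]) hne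
  | succ k ih =>
    obtain ⟨S, ⟨e⟩, hQ⟩ := filt_bot hX
    set ψ : M →ₗ[R] M := (h.comp S.subtype).comp e.symm.toLinearMap with hψ
    have hψe : ∀ x : ↥S, ψ (e x) = h x := by
      intro x; simp [hψ]
    by_cases hψ0 : ψ = 0
    · have hSle : S ≤ ker h := by
        intro s hs
        have := hψe ⟨s, hs⟩
        rw [hψ0] at this
        simpa using this.symm
      have hbar : S.liftQ h hSle ≠ 0 := by
        intro h0
        apply hne
        have : (S.liftQ h hSle).comp S.mkQ = h := Submodule.liftQ_mkQ S h hSle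
        rw [← this, h0]
        ext x; simp
      have := ih hQ (S.liftQ h hSle) hbar
      intro m
      obtain ⟨z, hz⟩ := this m
      obtain ⟨x, rfl⟩ := S.mkQ_surjective z
      exact ⟨x, by simpa using hz⟩
    · have hbij := hM.2 ψ hψ0
      intro m
      obtain ⟨m', hm'⟩ := hbij.2 m
      exact ⟨S.subtype (e.symm m'), hm'⟩


/-- if the composite `M ≃ S ⊆ X → M` is bijective then `S` splits off -/
def quotEquivKerOfCompl {X : Type} [AddCommGroup X] [Module R X]
    (S : Submodule R X) (e : ↥S ≃ₗ[R] M) (h : X →ₗ[R] M)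
    (hbij : Bijective ((h.comp S.subtype).comp e.symm.toLinearMap)) :
    (X ⧸ S) ≃ₗ[R] ↥(ker h) := by
  set ψ : M →ₗ[R] M := (h.comp S.subtype).comp e.symm.toLinearMap with hψdef
  have hψe : ∀ x : ↥S, ψ (e x) = h ↑x := by intro x; simp [hψdef]
  have hdisj : S ⊓ ker h = ⊥ := by
    rw [eq_bot_iff]
    rintro x ⟨hxS, hxk⟩
    have h0 : ψ (e ⟨x, hxS⟩) = 0 := by rw [hψe]; exact hxk
    have h1 : e ⟨x, hxS⟩ = 0 := hbij.1 (by simpa using h0)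
    have h2 : (⟨x, hxS⟩ : ↥S) = 0 := e.injective (by simpa using h1)
    simpa using congrArg Subtype.val h2
  have hcod : S ⊔ ker h = ⊤ := by
    rw [eq_top_iff]
    intro x _
    obtain ⟨m, hm⟩ := hbij.2 (h x)
    have hhs : h ↑(e.symm m) = h x := by
      rw [← hψe (e.symm m), e.apply_symm_apply]; exact hm
    refine Submodule.mem_sup.mpr ⟨↑(e.symm m), (e.symm m).2, x - ↑(e.symm m), ?_, by abel⟩
    simp [LinearMap.mem_ker, map_sub, hhs]
  exact Submodule.quotientEquivOfIsCompl S (ker h)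
    ⟨disjoint_iff.mpr hdisj, codisjoint_iff.mpr hcod⟩


/-- the kernel of a surjection from a filtered module onto `M` is filtered one shorter -/
theorem filt_ker_surj (hM : Schurian R M) {k : ℕ} {X : Type} [AddCommGroup X] [Module R X]
    (hX : Filt R M (k+1) X) (h : X →ₗ[R] M) (hs : Surjective h) :
    Filt R M k ↥(ker h) := by
  induction k generalizing X with
  | zero =>
    obtain ⟨S, ⟨e⟩, hQ⟩ := filt_bot hX
    by_cases hψ0 : (h.comp S.subtype).comp e.symm.toLinearMap = 0
    · exfalso
      haveI : Subsingleton (X ⧸ S) := hQ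
      have hall : ∀ x : X, h x = 0 := by
        intro x
        have hxS : x ∈ S := by
          have : S.mkQ x = 0 := Subsingleton.elim _ _
          rwa [← Submodule.Quotient.mk_eq_zero]
        have := congrArg (fun g : M →ₗ[R] M => g (e ⟨x, hxS⟩)) hψ0
        simpa using this
      obtain ⟨y, hy⟩ := hM.1
      obtain ⟨x, hx⟩ := hs y
      exact hy (hx ▸ hall x)
    · exact filt_congr (quotEquivKerOfCompl S e h (hM.2 _ hψ0)) hQ
  | succ k ih =>
    obtain ⟨S, ⟨e⟩, hQ⟩ := filt_bot hX
    by_cases hψ0 : (h.comp S.subtype).comp e.symm.toLinearMap = 0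
    · have hSle : S ≤ ker h := by
        intro s hsS
        have := congrArg (fun g : M →ₗ[R] M => g (e ⟨s, hsS⟩)) hψ0
        simpa using this
      set hbar : (X ⧸ S) →ₗ[R] M := S.liftQ h hSle with hbardef
      have hbar_mk : ∀ x : X, hbar (S.mkQ x) = h x := by intro x; simp [hbardef]
      have hbarsurj : Surjective hbar := by
        intro m
        obtain ⟨x, hx⟩ := hs m
        exact ⟨S.mkQ x, by rw [hbar_mk]; exact hx⟩
      have hker' := ih hQ hbar hbarsurj
      have hpf : ∀ c : ↥(ker h), S.mkQ ↑c ∈ ker hbar := by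
        intro c
        rw [LinearMap.mem_ker, hbar_mk]
        exact c.2
      set ρ : ↥(ker h) →ₗ[R] ↥(ker hbar) :=
        codRestrict (ker hbar) (S.mkQ.comp (ker h).subtype) hpf with hρdef
      have hkerρ : ker ρ = comap (ker h).subtype S := by
        rw [hρdef, LinearMap.ker_codRestrict _ _ hpf, LinearMap.ker_comp, Submodule.ker_mkQ]
      have hranρ : range ρ = ⊤ := by
        rw [hρdef, LinearMap.range_codRestrict _ _ hpf, LinearMap.range_comp, Submodule.range_subtype]
        rw [eq_top_iff]
        rintro ⟨z, hz⟩ _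
        obtain ⟨x, rfl⟩ := S.mkQ_surjective z
        have hxk : x ∈ ker h := by
          rw [LinearMap.mem_ker, ← hbar_mk]; exact hz
        exact ⟨x, hxk, rfl⟩
      have h1 : Filt R M 1 ↥(comap (ker h).subtype S) :=
        filt_one ((Submodule.comapSubtypeEquivOfLe hSle).trans e)
      have hquot : Filt R M k (↥(ker h) ⧸ comap (ker h).subtype S) :=
        filt_congr (quotEquivKR ρ hkerρ hranρ).symm hker'
      have := filt_ext (M := M) (comap (ker h).subtype S) h1 hquot
      rwa [Nat.add_comm] at this
    · exact filt_congr (quotEquivKerOfCompl S e h (hM.2 _ hψ0)) hQ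

/-- main lemma: kernels and cokernels of maps between filtered modules are filtered -/
theorem filt_ker_coker (hM : Schurian R M) :
    ∀ (l k : ℕ) (X Y : Type) [AddCommGroup X] [Module R X] [AddCommGroup Y] [Module R Y],
      Filt R M k X → Filt R M l Y → ∀ f : X →ₗ[R] Y,
        (∃ a, Filt R M a ↥(ker f)) ∧ (∃ b, Filt R M b (Y ⧸ range f)) := by
  intro l
  induction l with
  | zero =>
    intro k X Y _ _ _ _ hX hY f
    haveI : Subsingleton Y := hY
    have hker : ker f = ⊤ := by
      rw [eq_top_iff]; intro x _
      simp [LinearMap.mem_ker, Subsingleton.elim (f x) 0]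
    constructor
    · exact ⟨k, filt_congr (Submodule.topEquiv.symm.trans
        (LinearEquiv.ofEq _ _ hker.symm)) hX⟩
    · exact ⟨0, (Submodule.mkQ_surjective (range f)).subsingleton⟩
  | succ l ih =>
    intro k X Y _ _ _ _ hX hY f
    obtain ⟨N, hN, ⟨q⟩⟩ := hY
    set π : Y →ₗ[R] M := (q : (Y ⧸ N) →ₗ[R] M).comp N.mkQ with hπdef
    have hkerπ : ker π = N := by
      rw [hπdef, LinearMap.ker_comp, LinearEquiv.ker, Submodule.comap_bot, Submodule.ker_mkQ]
    by_cases hg : π.comp f = 0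
    · -- f lands in N
      have hfN : ∀ x, f x ∈ N := by
        intro x
        rw [← hkerπ, LinearMap.mem_ker]
        exact congrArg (fun g : X →ₗ[R] M => g x) hg
      set f' : X →ₗ[R] ↥N := codRestrict N f hfN with hf'def
      obtain ⟨⟨a, ha⟩, ⟨b, hb⟩⟩ := ih k X ↥N hX hN f'
      constructor
      · rw [hf'def, LinearMap.ker_codRestrict] at ha
        exact ⟨a, ha⟩
      · -- cokernel: extension of M by coker f'
        have hrle : range f ≤ N := by rintro y ⟨x, rfl⟩; exact hfN x
        have hb2 : Filt R M b ↥(Submodule.map (range f).mkQ N) := by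
          refine filt_congr (quotEquivKR' (K := comap N.subtype (range f)) ((range f).mkQ.comp N.subtype) ?_ ?_) ?_
          · rw [LinearMap.ker_comp, Submodule.ker_mkQ]
          · rw [LinearMap.range_comp, Submodule.range_subtype]
          · rw [hf'def, LinearMap.range_codRestrict] at hb
            exact hb
        have htop : Filt R M 1 ((Y ⧸ range f) ⧸ Submodule.map (range f).mkQ N) :=
          filt_one ((Submodule.quotientQuotientEquivQuotient (range f) N hrle).trans q)
        exact ⟨b + 1, filt_ext _ hb2 htop⟩
    · -- π ∘ f is a nonzero map to M, hence surjective
      have hgs : Surjective (π.comp f) := filt_hom_surj hM hX _ hg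
      match k, hX with
      | 0, hX =>
        exfalso
        haveI : Subsingleton X := hX
        apply hg
        ext x
        simp [Subsingleton.elim x 0]
      | (k''+1), hX =>
        have hK := filt_ker_surj hM hX (π.comp f) hgs
        set K : Submodule R X := ker (π.comp f) with hKdef
        have hfKN : ∀ c : ↥K, f ↑c ∈ N := by
          rintro ⟨x, hx⟩
          rw [← hkerπ, LinearMap.mem_ker]
          exact hx
        set f' : ↥K →ₗ[R] ↥N := codRestrict N (f.comp K.subtype) hfKN with hf'def
        obtain ⟨⟨a, ha⟩, ⟨b, hb⟩⟩ := ih k'' ↥K ↥N hK hN f'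
        constructor
        · -- kernel
          have hkle : ker f ≤ K := by
            intro x hx
            rw [hKdef, LinearMap.mem_ker, LinearMap.comp_apply, hx, map_zero]
          have hker' : ker f' = comap K.subtype (ker f) := by
            rw [hf'def, LinearMap.ker_codRestrict _ _ hfKN, LinearMap.ker_comp]
          rw [hker'] at ha
          exact ⟨a, filt_congr (Submodule.comapSubtypeEquivOfLe hkle) ha⟩
        · -- cokernel
          have hsup : N ⊔ range f = ⊤ := by
            rw [eq_top_iff]
            intro y _
            obtain ⟨x, hx⟩ := hgs (π y)
            have hyN : y - f x ∈ N := by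
              rw [← hkerπ, LinearMap.mem_ker, map_sub]
              rw [LinearMap.comp_apply] at hx
              rw [hx, sub_self]
            exact Submodule.mem_sup.mpr ⟨y - f x, hyN, f x, ⟨x, rfl⟩, by abel⟩
          have hmapK : Submodule.map f K = N ⊓ range f := by
            ext y
            constructor
            · rintro ⟨x, hx, rfl⟩
              exact ⟨hfKN ⟨x, hx⟩, x, rfl⟩
            · rintro ⟨hyN, x, rfl⟩
              have hxK : x ∈ K := by
                rw [hKdef, LinearMap.mem_ker, LinearMap.comp_apply, ← hkerπ] at *
                exact hyN
              exact ⟨x, hxK, rfl⟩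
          have hranf' : range f' = comap N.subtype (N ⊓ range f) := by
            rw [hf'def, LinearMap.range_codRestrict _ _ hfKN, LinearMap.range_comp,
              Submodule.range_subtype, hmapK]
          rw [hranf'] at hb
          -- second isomorphism theorem
          have e2 := LinearMap.quotientInfEquivSupQuotient N (range f)
          have hb2 : Filt R M b (↥(N ⊔ range f) ⧸ comap (N ⊔ range f).subtype (range f)) :=
            filt_congr e2 hb
          have e3 : (↥(N ⊔ range f) ⧸ comap (N ⊔ range f).subtype (range f)) ≃ₗ[R]
              (Y ⧸ range f) :=
            quotEquivKR ((range f).mkQ.comp (N ⊔ range f).subtype)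
              (by rw [LinearMap.ker_comp, Submodule.ker_mkQ])
              (by rw [LinearMap.range_comp, Submodule.range_subtype, hsup,
                Submodule.map_top, Submodule.range_mkQ])
          exact ⟨b, filt_congr e3 hb2⟩

theorem subsingleton_of_bot_eq_top' {X : Type} [AddCommGroup X] [Module R X]
    (h : (⊥ : Submodule R X) = ⊤) : Subsingleton X := by
  constructor
  intro a b
  have ha : a ∈ (⊥ : Submodule R X) := h.symm ▸ Submodule.mem_top
  have hb : b ∈ (⊥ : Submodule R X) := h.symm ▸ Submodule.mem_top
  rw [Submodule.mem_bot] at ha hb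
  rw [ha, hb]

/-- `↥T ⧸ N ≃ X ⧸ N` when `T = ⊤` -/
def quotSubEquivTop {X : Type} [AddCommGroup X] [Module R X] {T N : Submodule R X}
    (hT : T = ⊤) : (↥T ⧸ comap T.subtype N) ≃ₗ[R] X ⧸ N :=
  quotEquivKR (N.mkQ.comp T.subtype)
    (by rw [LinearMap.ker_comp, Submodule.ker_mkQ])
    (by rw [LinearMap.range_comp, Submodule.range_subtype, hT, Submodule.map_top,
      Submodule.range_mkQ])

/-- restricting a subquotient to a submodule containing it -/
def quotComapEquiv {X : Type} [AddCommGroup X] [Module R X] {N A B : Submodule R X}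
    (hAN : A ≤ N) (hBA : B ≤ A) :
    (↥(comap N.subtype A) ⧸ comap (comap N.subtype A).subtype (comap N.subtype B)) ≃ₗ[R]
      (↥A ⧸ comap A.subtype B) := by
  have e := quotMapEquiv N.subtype N.injective_subtype (comap N.subtype A) (comap N.subtype B)
    (comap_mono hBA)
  rw [Submodule.map_comap_subtype, Submodule.map_comap_subtype,
    inf_eq_right.mpr hAN, inf_eq_right.mpr (hBA.trans hAN)] at e
  exact e

theorem filt_of_isFiltered' {X : Type} [AddCommGroup X] [Module R X]
    (h : IsFiltered R M X) : ∃ k, Filt R M k X := by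
  obtain ⟨k, F, hmono, hF0, hFtop, hsub⟩ := h
  induction k generalizing X with
  | zero =>
    refine ⟨0, subsingleton_of_bot_eq_top' (R := R) ?_⟩
    rw [← hF0, ← hFtop]
    rfl
  | succ s ih =>
    have hNle : ∀ i : Fin (s+1), F (Fin.castSucc i) ≤ F (Fin.castSucc (Fin.last s)) :=
      fun i => hmono (Fin.castSucc_le_castSucc_iff.mpr (Fin.le_last _))
    obtain ⟨m, hm⟩ := ih (X := ↥(F (Fin.castSucc (Fin.last s))))
      (fun i => comap (F (Fin.castSucc (Fin.last s))).subtype (F (Fin.castSucc i)))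
      (fun i j hij => comap_mono (hmono (Fin.castSucc_le_castSucc_iff.mpr hij)))
      (by
        simp only [Fin.castSucc_zero]
        rw [hF0, Submodule.comap_bot, Submodule.ker_subtype])
      (Submodule.comap_subtype_self _)
      (by
        intro j
        obtain ⟨e⟩ := hsub (Fin.castSucc j)
        have hA : F ((Fin.castSucc j).succ) ≤ F (Fin.castSucc (Fin.last s)) := by
          rw [Fin.succ_castSucc]
          exact hNle _
        have hB : F ((Fin.castSucc j).castSucc) ≤ F ((Fin.castSucc j).succ) :=
          hmono (Fin.castSucc_le_succ _)
        exact ⟨LinearEquiv.trans (quotComapEquiv hA hB) e⟩)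
    refine ⟨m + 1, ⟨F (Fin.castSucc (Fin.last s)), hm, ?_⟩⟩
    obtain ⟨e⟩ := hsub (Fin.last s)
    have hT : F ((Fin.last s).succ) = ⊤ := by rw [Fin.succ_last]; exact hFtop
    exact ⟨(quotSubEquivTop hT).symm.trans e⟩

theorem nonempty_subquot_congr {X : Type} [AddCommGroup X] [Module R X]
    {A A' B B' : Submodule R X} (hA : A = A') (hB : B = B')
    (h : Nonempty ((↥A ⧸ comap A.subtype B) ≃ₗ[R] M)) :
    Nonempty ((↥A' ⧸ comap A'.subtype B') ≃ₗ[R] M) := by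
  subst hA; subst hB; exact h

theorem isFiltered_of_filt {k : ℕ} {X : Type} [AddCommGroup X] [Module R X]
    (h : Filt R M k X) : IsFiltered R M X := by
  induction k generalizing X with
  | zero =>
    haveI : Subsingleton X := h
    refine ⟨0, fun _ => ⊥, monotone_const, rfl, ?_, fun i => i.elim0⟩
    rw [eq_top_iff]
    intro x _
    rw [Submodule.mem_bot, Subsingleton.elim x 0]
  | succ k ih =>
    obtain ⟨N, hN, ⟨q⟩⟩ := h
    obtain ⟨s, G, hGmono, hG0, hGtop, hGsub⟩ := ih hN
    refine ⟨s + 1, Fin.snoc (fun i => Submodule.map N.subtype (G i)) ⊤, ?_, ?_, ?_, ?_⟩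
    · -- monotone
      intro i j hij
      rcases Fin.eq_castSucc_or_eq_last j with ⟨j', rfl⟩ | rfl
      · have hij' : i ≤ Fin.castSucc j' := hij
        rcases Fin.eq_castSucc_or_eq_last i with ⟨i', rfl⟩ | rfl
        · rw [Fin.snoc_castSucc, Fin.snoc_castSucc]
          exact Submodule.map_mono (hGmono (Fin.castSucc_le_castSucc_iff.mp hij'))
        · exact absurd (lt_of_le_of_lt hij' (Fin.castSucc_lt_last j')) (lt_irrefl _)
      · rw [Fin.snoc_last]
        exact le_top
    · -- bottom
      rw [show (0 : Fin (s + 2)) = Fin.castSucc 0 from rfl, Fin.snoc_castSucc, hG0,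
        Submodule.map_bot]
    · exact Fin.snoc_last _ _
    · intro i
      rcases Fin.eq_castSucc_or_eq_last i with ⟨j, rfl⟩ | rfl
      · -- middle subquotients
        obtain ⟨e⟩ := hGsub j
        have hA : Submodule.map N.subtype (G j.succ)
            = Fin.snoc (α := fun _ => Submodule R X) (fun i => Submodule.map N.subtype (G i)) ⊤ ((Fin.castSucc j).succ) := by
          rw [show ((Fin.castSucc j).succ) = Fin.castSucc j.succ from rfl, Fin.snoc_castSucc]
        have hB : Submodule.map N.subtype (G j.castSucc)
            = Fin.snoc (α := fun _ => Submodule R X) (fun i => Submodule.map N.subtype (G i)) ⊤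
              ((Fin.castSucc j).castSucc) := by
          rw [Fin.snoc_castSucc]
        exact nonempty_subquot_congr hA hB
          ⟨LinearEquiv.trans (quotMapEquiv N.subtype N.injective_subtype (G j.succ)
            (G j.castSucc) (hGmono (Fin.castSucc_le_succ _))).symm e⟩
      · -- top subquotient
        have hA : (⊤ : Submodule R X)
            = Fin.snoc (α := fun _ => Submodule R X) (fun i => Submodule.map N.subtype (G i)) ⊤ ((Fin.last s).succ) := by
          rw [show ((Fin.last s).succ : Fin (s + 2)) = Fin.last (s + 1) from rfl,
            Fin.snoc_last]
        have hB : N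
            = Fin.snoc (α := fun _ => Submodule R X) (fun i => Submodule.map N.subtype (G i)) ⊤ ((Fin.last s).castSucc) := by
          rw [Fin.snoc_castSucc, hGtop, Submodule.map_subtype_top]
        exact nonempty_subquot_congr hA hB ⟨(quotSubEquivTop rfl).trans q⟩

end Aux

/-- If `M` is a Schurian `Λ`-module, then `E(M)` (modules filtered by copies
of `M`) is an abelian subcategory: it is closed under kernels and cokernels of its
morphisms. -/
theorem stmt7 (Λ : Type) [Ring Λ]
    (M : Type) [AddCommGroup M] [Module Λ M] [IsNoetherian Λ M] [IsArtinian Λ M]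
    (hM : Schurian Λ M)
    (X Y : Type) [AddCommGroup X] [Module Λ X] [AddCommGroup Y] [Module Λ Y]
    (hX : IsFiltered Λ M X) (hY : IsFiltered Λ M Y) (f : X →ₗ[Λ] Y) :
    IsFiltered Λ M ↥(LinearMap.ker f) ∧ IsFiltered Λ M (Y ⧸ LinearMap.range f) := by
  obtain ⟨k, hk⟩ := filt_of_isFiltered' (R := Λ) (M := M) hX
  obtain ⟨l, hl⟩ := filt_of_isFiltered' (R := Λ) (M := M) hY
  obtain ⟨⟨a, ha⟩, ⟨b, hb⟩⟩ := filt_ker_coker hM l k X Y hk hl f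
  exact ⟨isFiltered_of_filt ha, isFiltered_of_filt hb⟩
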